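/- Let c and d be conilpotent cocategories. Then their tensor product cocategory c ⊠ d (with objects Ob c × Ob d, comultiplication (Δ ⊠ Δ) followed by the middle four interchange, and componentwise counit and augmentation) is again conilpotent. Quantitatively: if Δ̄⁽ⁿ⁾ c = 0 and Δ̄⁽ᵐ⁾ d = 0 then Δ̄⁽ⁿ⁺ᵐ⁻¹⁾ (c ⊠ d) = 0, and Δ̄⁽ⁿ⁾ (c ⊠ η_U) = 0. -/

import Mathlib

open scoped TensorProduct

universe u

variable (Λ : Type u) [CommRing Λ]

/-- Iterated comultiplication `Δ⁽ⁿ⁾ : A → A^{⊗n}` of a coalgebra. -/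
noncomputable def comulIter (A : Type u) [AddCommGroup A] [Module Λ A] [Coalgebra Λ A] :
    (n : ℕ) → (A →ₗ[Λ] ⨂[Λ] (_ : Fin n), A)
  | 0 => (PiTensorProduct.isEmptyEquiv (Fin 0)).symm.toLinearMap ∘ₗ Coalgebra.counit
  | 1 => (PiTensorProduct.subsingletonEquiv (s := fun _ : Fin 1 => A) (0 : Fin 1)).symm.toLinearMap
  | (n+2) =>
      (PiTensorProduct.reindex Λ (fun _ : Fin 1 ⊕ Fin (n+1) => A)
          (finSumFinEquiv.trans (finCongr (by omega)))).toLinearMap ∘ₗ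
        (PiTensorProduct.tmulEquiv Λ A).toLinearMap ∘ₗ
        (TensorProduct.map (PiTensorProduct.subsingletonEquiv (0 : Fin 1)).symm.toLinearMap
          (comulIter A (n+1))) ∘ₗ
        Coalgebra.comul

/-- `π^{⊗n}` where `π = id - η ∘ ε` is the projection onto the reduced part; composing
with `Δ⁽ⁿ⁾` gives the iterated reduced comultiplication `Δ̄⁽ⁿ⁾` (on the reduced part). -/
noncomputable def redPow (A : Type u) [AddCommGroup A] [Module Λ A] [Coalgebra Λ A]
    (η : Λ →ₗ[Λ] A) (n : ℕ) :
    (⨂[Λ] (_ : Fin n), A) →ₗ[Λ] ⨂[Λ] (_ : Fin n), A :=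
  PiTensorProduct.map (fun _ => LinearMap.id - η ∘ₗ Coalgebra.counit)

/-- Conilpotency of an augmented coalgebra: every element is killed by some iterated
reduced comultiplication. -/
def IsConilpotent (A : Type u) [AddCommGroup A] [Module Λ A] [Coalgebra Λ A]
    (η : Λ →ₗ[Λ] A) : Prop :=
  ∀ x : A, ∃ n : ℕ, 1 < n ∧ redPow Λ A η n (comulIter Λ A n x) = 0

open PiTensorProduct

section ExtHelper

lemma extTT {M N P : Type u} [AddCommGroup M] [Module Λ M] [AddCommGroup N] [Module Λ N]
    [AddCommGroup P] [Module Λ P] {k l : ℕ}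
    {f g : ((⨂[Λ] (_ : Fin k), M) ⊗[Λ] (⨂[Λ] (_ : Fin l), N)) →ₗ[Λ] P}
    (h : ∀ (a : Fin k → M) (b : Fin l → N),
      f (tprod Λ a ⊗ₜ[Λ] tprod Λ b) = g (tprod Λ a ⊗ₜ[Λ] tprod Λ b)) : f = g := by
  ext a b
  exact h a b

end ExtHelper

section Gadgets

variable (A : Type u) [AddCommGroup A] [Module Λ A]

noncomputable def sing : A →ₗ[Λ] ⨂[Λ] (_ : Fin 1), A :=
  (PiTensorProduct.subsingletonEquiv (s := fun _ : Fin 1 => A) (0 : Fin 1)).symm.toLinearMap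

noncomputable def Phi (m : ℕ) :
    ((⨂[Λ] (_ : Fin 1), A) ⊗[Λ] (⨂[Λ] (_ : Fin m), A)) →ₗ[Λ] ⨂[Λ] (_ : Fin (m+1)), A :=
  (PiTensorProduct.reindex Λ (fun _ : Fin 1 ⊕ Fin m => A)
      (finSumFinEquiv.trans (finCongr (by omega)))).toLinearMap ∘ₗ
    (PiTensorProduct.tmulEquiv Λ A).toLinearMap

noncomputable def PhiInv (m : ℕ) :
    (⨂[Λ] (_ : Fin (m+1)), A) →ₗ[Λ] ((⨂[Λ] (_ : Fin 1), A) ⊗[Λ] (⨂[Λ] (_ : Fin m), A)) :=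
  (PiTensorProduct.tmulEquiv Λ A).symm.toLinearMap ∘ₗ
  (PiTensorProduct.reindex Λ (fun _ : Fin 1 ⊕ Fin m => A)
      (finSumFinEquiv.trans (finCongr (by omega)))).symm.toLinearMap

lemma sing_apply (v : A) : sing Λ A v = tprod Λ (fun _ : Fin 1 => v) := by
  simp [sing]

lemma PhiInv_Phi (m : ℕ) : PhiInv Λ A m ∘ₗ Phi Λ A m = LinearMap.id := by
  refine LinearMap.ext fun x => ?_
  simp only [Phi, PhiInv, LinearMap.comp_apply, LinearEquiv.coe_toLinearMap,
    LinearEquiv.symm_apply_apply, LinearMap.id_apply]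

lemma Phi_tprod (m : ℕ) (v : A) (b : Fin m → A) :
    Phi Λ A m (sing Λ A v ⊗ₜ[Λ] tprod Λ b) = PiTensorProduct.tprod Λ (Fin.cons v b) := by
  simp only [Phi, sing, LinearMap.comp_apply, LinearEquiv.coe_toLinearMap,
    PiTensorProduct.subsingletonEquiv_symm_apply, PiTensorProduct.tmulEquiv_apply,
    PiTensorProduct.reindex_tprod]
  congr 1
  funext i
  refine Fin.cases ?_ (fun j => ?_) i
  · have h0 : (finSumFinEquiv.trans (finCongr (by omega : 1 + m = m + 1))).symm (0 : Fin (m+1))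
        = Sum.inl 0 := by
      rw [Equiv.symm_apply_eq]; simp [finSumFinEquiv, Fin.ext_iff]
    rw [h0]; rfl
  · have hj : (finSumFinEquiv.trans (finCongr (by omega : 1 + m = m + 1))).symm j.succ
        = Sum.inr j := by
      rw [Equiv.symm_apply_eq]; simp [finSumFinEquiv, Fin.ext_iff]
    rw [hj]; rfl

lemma tprodOne (a : Fin 1 → A) : tprod Λ a = sing Λ A (a 0) := by
  rw [sing_apply]
  congr 1
  funext i
  rw [Subsingleton.elim i 0]

lemma map_Phi (m : ℕ) (g : Fin (m+1) → (A →ₗ[Λ] A)) :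
    PiTensorProduct.map g ∘ₗ Phi Λ A m =
      Phi Λ A m ∘ₗ TensorProduct.map (PiTensorProduct.map (fun _ : Fin 1 => g 0))
        (PiTensorProduct.map (fun i : Fin m => g i.succ)) := by
  apply extTT
  intro a b
  simp only [LinearMap.comp_apply, TensorProduct.map_tmul]
  rw [tprodOne Λ A a, Phi_tprod, sing_apply]
  simp only [PiTensorProduct.map_tprod]
  rw [tprodOne Λ A (fun _ : Fin 1 => (g 0) (a 0)), Phi_tprod]
  congr 1
  funext i
  refine Fin.cases ?_ (fun j => ?_) i
  · simp
  · simp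

lemma PhiInv_tprod (k : ℕ) (x : Fin (k+1) → A) :
    PhiInv Λ A k (tprod Λ x) =
      sing Λ A (x 0) ⊗ₜ[Λ] tprod Λ (fun j : Fin k => x j.succ) := by
  have hx : tprod Λ x = Phi Λ A k (sing Λ A (x 0) ⊗ₜ[Λ] tprod Λ (fun j : Fin k => x j.succ)) := by
    rw [Phi_tprod]
    congr 1
    funext i
    exact Fin.cases rfl (fun j => rfl) i
  rw [hx, ← LinearMap.comp_apply, PhiInv_Phi, LinearMap.id_apply]

variable [Coalgebra Λ A]

lemma comulIter_two_succ (n : ℕ) : comulIter Λ A (n+2) =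
    Phi Λ A (n+1) ∘ₗ (TensorProduct.map (sing Λ A) (comulIter Λ A (n+1))) ∘ₗ
      Coalgebra.comul := rfl

lemma comulIter_succ (m : ℕ) : comulIter Λ A (m+1) =
    Phi Λ A m ∘ₗ (TensorProduct.map (sing Λ A) (comulIter Λ A m)) ∘ₗ Coalgebra.comul := by
  cases m with
  | succ m => rfl
  | zero =>
    refine LinearMap.ext fun x => ?_
    have h1 : TensorProduct.map (sing Λ A) (comulIter Λ A 0) =
        TensorProduct.map (sing Λ A) (PiTensorProduct.isEmptyEquiv (Fin 0)).symm.toLinearMap ∘ₗ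
          LinearMap.lTensor A Coalgebra.counit := by
      refine TensorProduct.ext' fun a b => ?_
      rfl
    simp only [LinearMap.comp_apply, h1]
    rw [show (LinearMap.lTensor A (Coalgebra.counit (R := Λ))) (Coalgebra.comul x)
        = x ⊗ₜ[Λ] (1 : Λ) from Coalgebra.lTensor_counit_comul x]
    simp only [TensorProduct.map_tmul, LinearEquiv.coe_toLinearMap,
      PiTensorProduct.isEmptyEquiv_symm_apply, one_smul]
    rw [show (tprod Λ (fun j : Fin 0 => (isEmptyElim j : A))) = tprod Λ (fun _ : Fin 0 => x) by
      congr 1; funext j; exact j.elim0]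
    rw [Phi_tprod]
    show comulIter Λ A 1 x = _
    rw [show comulIter Λ A 1 = sing Λ A from rfl, sing_apply]
    congr 1
    funext i
    exact Fin.cases rfl (fun j => j.elim0) i

lemma redPow_sing (η : Λ →ₗ[Λ] A) :
    redPow Λ A η 1 ∘ₗ sing Λ A = sing Λ A ∘ₗ ((LinearMap.id : A →ₗ[Λ] A) - η ∘ₗ (Coalgebra.counit (R := Λ) (A := A))) := by
  refine LinearMap.ext fun x => ?_
  simp only [LinearMap.comp_apply, redPow, sing_apply, PiTensorProduct.map_tprod]

lemma Dbar_succ (η : Λ →ₗ[Λ] A) (m : ℕ) :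
    redPow Λ A η (m+1) ∘ₗ comulIter Λ A (m+1) =
      Phi Λ A m ∘ₗ (TensorProduct.map (sing Λ A ∘ₗ ((LinearMap.id : A →ₗ[Λ] A) - η ∘ₗ (Coalgebra.counit (R := Λ) (A := A))))
        (redPow Λ A η m ∘ₗ comulIter Λ A m)) ∘ₗ Coalgebra.comul := by
  rw [comulIter_succ]
  have h2 : redPow Λ A η (m+1) ∘ₗ Phi Λ A m =
      Phi Λ A m ∘ₗ TensorProduct.map (redPow Λ A η 1) (redPow Λ A η m) :=
    map_Phi Λ A m (fun _ => LinearMap.id - η ∘ₗ Coalgebra.counit)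
  calc redPow Λ A η (m+1) ∘ₗ Phi Λ A m ∘ₗ (TensorProduct.map (sing Λ A) (comulIter Λ A m)) ∘ₗ
        Coalgebra.comul
      = (redPow Λ A η (m+1) ∘ₗ Phi Λ A m) ∘ₗ (TensorProduct.map (sing Λ A) (comulIter Λ A m)) ∘ₗ
        Coalgebra.comul := by rw [LinearMap.comp_assoc]
    _ = Phi Λ A m ∘ₗ (TensorProduct.map (redPow Λ A η 1) (redPow Λ A η m) ∘ₗ
        TensorProduct.map (sing Λ A) (comulIter Λ A m)) ∘ₗ Coalgebra.comul := by
        rw [h2]; simp only [LinearMap.comp_assoc]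
    _ = _ := by rw [← TensorProduct.map_comp, redPow_sing]

end Gadgets

def sCount {k : ℕ} (f : Fin k → Bool) : ℕ := ∑ i, (if f i then 1 else 0)

lemma sCount_succ {k : ℕ} (f : Fin (k+1) → Bool) :
    sCount f = (if f 0 then 1 else 0) + sCount (fun i => f i.succ) :=
  Fin.sum_univ_succ _

section Main

variable (A : Type u) [AddCommGroup A] [Module Λ A] [Coalgebra Λ A]
variable (η : Λ →ₗ[Λ] A)

noncomputable def cnd (b : Bool) : A →ₗ[Λ] A :=
  if b then LinearMap.id - η ∘ₗ Coalgebra.counit else η ∘ₗ Coalgebra.counit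

lemma map_sing (g : A →ₗ[Λ] A) :
    PiTensorProduct.map (fun _ : Fin 1 => g) ∘ₗ sing Λ A = sing Λ A ∘ₗ g := by
  refine LinearMap.ext fun x => ?_
  simp only [LinearMap.comp_apply, sing_apply, PiTensorProduct.map_tprod]

lemma mapfam_comulIter_succ (k : ℕ) (g : Fin (k+1) → (A →ₗ[Λ] A)) :
    PiTensorProduct.map g ∘ₗ comulIter Λ A (k+1) =
      Phi Λ A k ∘ₗ (TensorProduct.map (sing Λ A ∘ₗ g 0)
        (PiTensorProduct.map (fun i : Fin k => g i.succ) ∘ₗ comulIter Λ A k)) ∘ₗ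
        Coalgebra.comul := by
  rw [comulIter_succ]
  calc PiTensorProduct.map g ∘ₗ Phi Λ A k ∘ₗ
        (TensorProduct.map (sing Λ A) (comulIter Λ A k)) ∘ₗ Coalgebra.comul
      = (PiTensorProduct.map g ∘ₗ Phi Λ A k) ∘ₗ
        (TensorProduct.map (sing Λ A) (comulIter Λ A k)) ∘ₗ Coalgebra.comul := by
        rw [LinearMap.comp_assoc]
    _ = Phi Λ A k ∘ₗ (TensorProduct.map (PiTensorProduct.map (fun _ : Fin 1 => g 0))
          (PiTensorProduct.map (fun i : Fin k => g i.succ)) ∘ₗ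
        TensorProduct.map (sing Λ A) (comulIter Λ A k)) ∘ₗ Coalgebra.comul := by
        rw [map_Phi]; simp only [LinearMap.comp_assoc]
    _ = _ := by rw [← TensorProduct.map_comp, map_sing]

lemma eta_r (r : Λ) : η r = r • η 1 := by
  rw [← map_smul, smul_eq_mul, mul_one]

lemma etaSlot {W : Type u} [AddCommGroup W] [Module Λ W] (Y : A →ₗ[Λ] W) :
    TensorProduct.map (sing Λ A ∘ₗ (η ∘ₗ Coalgebra.counit)) Y ∘ₗ Coalgebra.comul =
      TensorProduct.mk Λ _ _ (sing Λ A (η 1)) ∘ₗ Y := by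
  have h1 : TensorProduct.map (sing Λ A ∘ₗ (η ∘ₗ Coalgebra.counit)) Y =
      TensorProduct.map (sing Λ A ∘ₗ η) Y ∘ₗ
        LinearMap.rTensor A (Coalgebra.counit (R := Λ) (A := A)) := by
    rw [LinearMap.map_comp_rTensor]
    rfl
  refine LinearMap.ext fun x => ?_
  simp only [h1, LinearMap.comp_apply]
  rw [Coalgebra.rTensor_counit_comul x]
  simp [TensorProduct.map_tmul]

lemma pi_eta (hcounit : Coalgebra.counit (R := Λ) (A := A) (η 1) = (1 : Λ)) : ((LinearMap.id : A →ₗ[Λ] A) - η ∘ₗ (Coalgebra.counit (R := Λ) (A := A))) (η 1) = 0 := by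
  simp [hcounit]

lemma comul_pi_decomp (hcomul : Coalgebra.comul (R := Λ) (A := A) (η 1) = η 1 ⊗ₜ[Λ] η 1) (x : A) :
    Coalgebra.comul (R := Λ) x =
      Coalgebra.comul (((LinearMap.id : A →ₗ[Λ] A) - η ∘ₗ (Coalgebra.counit (R := Λ) (A := A))) x) +
        Coalgebra.counit (R := Λ) x • (η 1 ⊗ₜ[Λ] η 1) := by
  have : Coalgebra.comul (R := Λ) (η (Coalgebra.counit (R := Λ) x)) =
      Coalgebra.counit (R := Λ) x • (η 1 ⊗ₜ[Λ] η 1) := by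
    rw [eta_r Λ A η, map_smul, hcomul]
  simp only [LinearMap.sub_apply, LinearMap.id_apply, LinearMap.comp_apply, map_sub, this]
  abel

lemma main_factor (hcomul : Coalgebra.comul (R := Λ) (A := A) (η 1) = η 1 ⊗ₜ[Λ] η 1)
    (hcounit : Coalgebra.counit (R := Λ) (A := A) (η 1) = (1 : Λ)) :
    ∀ (k : ℕ) (f : Fin k → Bool) (n : ℕ), 1 ≤ n → n ≤ sCount f →
    ∃ J : (⨂[Λ] (_ : Fin n), A) →ₗ[Λ] ⨂[Λ] (_ : Fin k), A,
      PiTensorProduct.map (fun i => cnd Λ A η (f i)) ∘ₗ comulIter Λ A k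
        = J ∘ₗ (redPow Λ A η n ∘ₗ comulIter Λ A n) := by
  intro k
  induction k with
  | zero =>
    intro f n hn hs
    exfalso
    have : sCount f = 0 := by simp [sCount]
    omega
  | succ k ih =>
    intro f n hn hs
    have hL := mapfam_comulIter_succ Λ A k (fun i => cnd Λ A η (f i))
    cases hf0 : f 0 with
    | false =>
      have hs' : n ≤ sCount (fun i => f i.succ) := by
        rw [sCount_succ, hf0] at hs; simpa using hs
      obtain ⟨J', hJ'⟩ := ih (fun i => f i.succ) n hn hs'
      refine ⟨Phi Λ A k ∘ₗ TensorProduct.mk Λ _ _ (sing Λ A (η 1)) ∘ₗ J', ?_⟩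
      rw [hL]
      have hc : cnd Λ A η (f 0) = η ∘ₗ Coalgebra.counit := by rw [hf0]; simp [cnd]
      rw [hc, hJ']
      have := etaSlot Λ A η (J' ∘ₗ (redPow Λ A η n ∘ₗ comulIter Λ A n))
      rw [this]
      simp only [LinearMap.comp_assoc]
    | true =>
      have hc : cnd Λ A η (f 0) = LinearMap.id - η ∘ₗ Coalgebra.counit := by
        rw [hf0]; simp [cnd]
      match n, hn with
      | 1, _ =>
        set X := PiTensorProduct.map (fun i : Fin k => cnd Λ A η (f i.succ)) ∘ₗ
          comulIter Λ A k with hX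
        refine ⟨Phi Λ A k ∘ₗ TensorProduct.map (sing Λ A ∘ₗ
            ((LinearMap.id : A →ₗ[Λ] A) - η ∘ₗ (Coalgebra.counit (R := Λ) (A := A)))) X ∘ₗ Coalgebra.comul ∘ₗ
            (PiTensorProduct.subsingletonEquiv (0 : Fin 1)).toLinearMap, ?_⟩
        rw [hL, hc]
        refine LinearMap.ext fun x => ?_
        simp only [LinearMap.comp_apply, LinearEquiv.coe_toLinearMap]
        have hred : (redPow Λ A η 1) (comulIter Λ A 1 x) =
            sing Λ A (((LinearMap.id : A →ₗ[Λ] A) - η ∘ₗ (Coalgebra.counit (R := Λ) (A := A))) x) := by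
          have : comulIter Λ A 1 x = sing Λ A x := rfl
          rw [this, ← LinearMap.comp_apply, redPow_sing]
          rfl
        rw [hred]
        have hsing : (PiTensorProduct.subsingletonEquiv (0 : Fin 1))
            (sing Λ A (((LinearMap.id : A →ₗ[Λ] A) - η ∘ₗ (Coalgebra.counit (R := Λ) (A := A))) x)) =
            ((LinearMap.id : A →ₗ[Λ] A) - η ∘ₗ (Coalgebra.counit (R := Λ) (A := A))) x := by
          simp [sing]
        rw [hsing]
        rw [comul_pi_decomp Λ A η hcomul x]
        simp only [map_add, map_smul]
        have hz : (TensorProduct.map (sing Λ A ∘ₗ ((LinearMap.id : A →ₗ[Λ] A) - η ∘ₗ (Coalgebra.counit (R := Λ) (A := A)))) X)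
            (η 1 ⊗ₜ[Λ] η 1) = 0 := by
          simp only [TensorProduct.map_tmul, LinearMap.comp_apply]
          rw [pi_eta Λ A η hcounit]
          simp
        rw [hz]
        simp
      | (n'+2), _ =>
        have hs' : n' + 1 ≤ sCount (fun i => f i.succ) := by
          rw [sCount_succ, hf0] at hs; simp at hs; omega
        obtain ⟨J', hJ'⟩ := ih (fun i => f i.succ) (n'+1) (by omega) hs'
        refine ⟨Phi Λ A k ∘ₗ LinearMap.lTensor (⨂[Λ] (_ : Fin 1), A) J' ∘ₗ
          PhiInv Λ A (n'+1), ?_⟩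
        rw [hL, hc, hJ']
        conv_rhs => rw [Dbar_succ Λ A η (n'+1)]
        calc Phi Λ A k ∘ₗ (TensorProduct.map
              (sing Λ A ∘ₗ ((LinearMap.id : A →ₗ[Λ] A) - η ∘ₗ (Coalgebra.counit (R := Λ) (A := A))))
              (J' ∘ₗ (redPow Λ A η (n'+1) ∘ₗ comulIter Λ A (n'+1)))) ∘ₗ Coalgebra.comul
            = Phi Λ A k ∘ₗ (LinearMap.lTensor _ J' ∘ₗ TensorProduct.map
              (sing Λ A ∘ₗ ((LinearMap.id : A →ₗ[Λ] A) - η ∘ₗ (Coalgebra.counit (R := Λ) (A := A))))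
              (redPow Λ A η (n'+1) ∘ₗ comulIter Λ A (n'+1))) ∘ₗ Coalgebra.comul := by
              rw [LinearMap.lTensor_comp_map]
          _ = (Phi Λ A k ∘ₗ LinearMap.lTensor _ J' ∘ₗ PhiInv Λ A (n'+1)) ∘ₗ
              (Phi Λ A (n'+1) ∘ₗ (TensorProduct.map
              (sing Λ A ∘ₗ ((LinearMap.id : A →ₗ[Λ] A) - η ∘ₗ (Coalgebra.counit (R := Λ) (A := A))))
              (redPow Λ A η (n'+1) ∘ₗ comulIter Λ A (n'+1))) ∘ₗ Coalgebra.comul) := by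
              simp only [← LinearMap.comp_assoc]
              congr 2
              simp only [LinearMap.comp_assoc]
              rw [PhiInv_Phi]
              simp
          _ = _ := by rw [← Dbar_succ]

lemma vanish (hcomul : Coalgebra.comul (R := Λ) (A := A) (η 1) = η 1 ⊗ₜ[Λ] η 1)
    (hcounit : Coalgebra.counit (R := Λ) (A := A) (η 1) = (1 : Λ))
    (k : ℕ) (f : Fin k → Bool) (n : ℕ) (hn : 1 ≤ n) (hs : n ≤ sCount f)
    (a : A) (ha : redPow Λ A η n (comulIter Λ A n a) = 0) :
    PiTensorProduct.map (fun i => cnd Λ A η (f i)) (comulIter Λ A k a) = 0 := by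
  obtain ⟨J, hJ⟩ := main_factor Λ A η hcomul hcounit k f n hn hs
  have h := LinearMap.congr_fun hJ a
  simp only [LinearMap.comp_apply] at h
  rw [h, ha, map_zero]

lemma redPow_eq_cnd (k : ℕ) :
    redPow Λ A η k = PiTensorProduct.map (fun _ : Fin k => cnd Λ A η true) := by
  unfold redPow cnd
  simp

lemma mono (hcomul : Coalgebra.comul (R := Λ) (A := A) (η 1) = η 1 ⊗ₜ[Λ] η 1)
    (hcounit : Coalgebra.counit (R := Λ) (A := A) (η 1) = (1 : Λ))
    {n k : ℕ} (hn : 1 ≤ n) (hk : n ≤ k) (a : A)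
    (ha : redPow Λ A η n (comulIter Λ A n a) = 0) :
    redPow Λ A η k (comulIter Λ A k a) = 0 := by
  have hs : n ≤ sCount (fun _ : Fin k => true) := by
    simp [sCount]; omega
  have h := vanish Λ A η hcomul hcounit k (fun _ => true) n hn hs a ha
  rw [redPow_eq_cnd]
  exact h

lemma comulIter_eta (hcomul : Coalgebra.comul (R := Λ) (A := A) (η 1) = η 1 ⊗ₜ[Λ] η 1)
    (hcounit : Coalgebra.counit (R := Λ) (A := A) (η 1) = (1 : Λ)) (m : ℕ) :
    comulIter Λ A m (η 1) = tprod Λ (fun _ : Fin m => η 1) := by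
  induction m with
  | zero =>
    show (PiTensorProduct.isEmptyEquiv (Fin 0)).symm (Coalgebra.counit (η 1)) = _
    rw [hcounit]
    simp only [PiTensorProduct.isEmptyEquiv_symm_apply, one_smul]
    congr 1
    funext j
    exact j.elim0
  | succ m ihm =>
    rw [comulIter_succ]
    simp only [LinearMap.comp_apply, hcomul, TensorProduct.map_tmul, ihm, Phi_tprod]
    congr 1
    funext i
    refine Fin.cases rfl (fun j => rfl) i

end Main

section Shuffle

variable (M N : Type u) [AddCommGroup M] [Module Λ M] [AddCommGroup N] [Module Λ N]

noncomputable def pair1 :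
    ((⨂[Λ] (_ : Fin 1), M) ⊗[Λ] (⨂[Λ] (_ : Fin 1), N)) →ₗ[Λ] ⨂[Λ] (_ : Fin 1), (M ⊗[Λ] N) :=
  sing Λ (M ⊗[Λ] N) ∘ₗ TensorProduct.map
    (PiTensorProduct.subsingletonEquiv (0 : Fin 1)).toLinearMap
    (PiTensorProduct.subsingletonEquiv (0 : Fin 1)).toLinearMap

lemma pair1_sing : pair1 Λ M N ∘ₗ TensorProduct.map (sing Λ M) (sing Λ N) =
    sing Λ (M ⊗[Λ] N) := by
  refine TensorProduct.ext' fun x y => ?_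
  simp [pair1, sing]

noncomputable def shuffle : (k : ℕ) →
    ((⨂[Λ] (_ : Fin k), M) ⊗[Λ] (⨂[Λ] (_ : Fin k), N)) →ₗ[Λ] ⨂[Λ] (_ : Fin k), (M ⊗[Λ] N)
  | 0 => (PiTensorProduct.isEmptyEquiv (Fin 0)).symm.toLinearMap ∘ₗ
      (TensorProduct.lid Λ Λ).toLinearMap ∘ₗ
      TensorProduct.map (PiTensorProduct.isEmptyEquiv (Fin 0)).toLinearMap
        (PiTensorProduct.isEmptyEquiv (Fin 0)).toLinearMap
  | (k+1) => Phi Λ (M ⊗[Λ] N) k ∘ₗ TensorProduct.map (pair1 Λ M N) (shuffle k) ∘ₗ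
      (TensorProduct.tensorTensorTensorComm Λ _ _ _ _).toLinearMap ∘ₗ
      TensorProduct.map (PhiInv Λ M k) (PhiInv Λ N k)

lemma shuffle_tprod (k : ℕ) (a : Fin k → M) (b : Fin k → N) :
    shuffle Λ M N k (tprod Λ a ⊗ₜ[Λ] tprod Λ b) = tprod Λ (fun i => a i ⊗ₜ[Λ] b i) := by
  induction k with
  | zero =>
    simp only [shuffle, LinearMap.comp_apply, LinearEquiv.coe_toLinearMap,
      TensorProduct.map_tmul, PiTensorProduct.isEmptyEquiv_apply_tprod,
      TensorProduct.lid_tmul, one_smul, PiTensorProduct.isEmptyEquiv_symm_apply]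
    congr 1
    funext j
    exact j.elim0
  | succ k ih =>
    simp only [shuffle, LinearMap.comp_apply, LinearEquiv.coe_toLinearMap,
      TensorProduct.map_tmul, PhiInv_tprod]
    rw [TensorProduct.tensorTensorTensorComm_tmul]
    simp only [TensorProduct.map_tmul, ih]
    have hp : pair1 Λ M N (sing Λ M (a 0) ⊗ₜ[Λ] sing Λ N (b 0)) =
        sing Λ (M ⊗[Λ] N) (a 0 ⊗ₜ[Λ] b 0) := by
      have := LinearMap.congr_fun (pair1_sing Λ M N) (a 0 ⊗ₜ[Λ] b 0)
      simpa using this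
    rw [hp, Phi_tprod]
    congr 1
    funext i
    refine Fin.cases rfl (fun j => rfl) i

lemma shuffle_nat (k : ℕ) (g : Fin k → (M →ₗ[Λ] M)) (h : Fin k → (N →ₗ[Λ] N)) :
    PiTensorProduct.map (fun i => TensorProduct.map (g i) (h i)) ∘ₗ shuffle Λ M N k =
      shuffle Λ M N k ∘ₗ
        TensorProduct.map (PiTensorProduct.map g) (PiTensorProduct.map h) := by
  apply extTT
  intro a b
  simp only [LinearMap.comp_apply, TensorProduct.map_tmul, PiTensorProduct.map_tprod,
    shuffle_tprod]

end Shuffle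

section TensorSide

lemma ttc_nat {M₁ M₂ N₁ N₂ P₁ P₂ Q₁ Q₂ : Type u}
    [AddCommGroup M₁] [Module Λ M₁] [AddCommGroup M₂] [Module Λ M₂]
    [AddCommGroup N₁] [Module Λ N₁] [AddCommGroup N₂] [Module Λ N₂]
    [AddCommGroup P₁] [Module Λ P₁] [AddCommGroup P₂] [Module Λ P₂]
    [AddCommGroup Q₁] [Module Λ Q₁] [AddCommGroup Q₂] [Module Λ Q₂]
    (f : M₁ →ₗ[Λ] M₂) (g : N₁ →ₗ[Λ] N₂) (h : P₁ →ₗ[Λ] P₂) (l : Q₁ →ₗ[Λ] Q₂) :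
    (TensorProduct.tensorTensorTensorComm Λ M₂ N₂ P₂ Q₂).toLinearMap ∘ₗ
      TensorProduct.map (TensorProduct.map f g) (TensorProduct.map h l) =
    TensorProduct.map (TensorProduct.map f h) (TensorProduct.map g l) ∘ₗ
      (TensorProduct.tensorTensorTensorComm Λ M₁ N₁ P₁ Q₁).toLinearMap := by
  ext m n p q
  simp [TensorProduct.tensorTensorTensorComm_tmul]

variable (A B : Type u) [AddCommGroup A] [Module Λ A] [Coalgebra Λ A]
  [AddCommGroup B] [Module Λ B] [Coalgebra Λ B]

lemma comulC_def : (Coalgebra.comul : (A ⊗[Λ] B) →ₗ[Λ] _) =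
    (TensorProduct.tensorTensorTensorComm Λ A A B B).toLinearMap ∘ₗ
      TensorProduct.map Coalgebra.comul Coalgebra.comul := rfl

lemma comulIter_tensor (k : ℕ) :
    comulIter Λ (A ⊗[Λ] B) k =
      shuffle Λ A B k ∘ₗ TensorProduct.map (comulIter Λ A k) (comulIter Λ B k) := by
  induction k with
  | zero =>
    refine TensorProduct.ext' fun a b => ?_
    show (PiTensorProduct.isEmptyEquiv (Fin 0)).symm (Coalgebra.counit (a ⊗ₜ[Λ] b)) = _
    rw [show (Coalgebra.counit (a ⊗ₜ[Λ] b) : Λ) =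
      Coalgebra.counit (R := Λ) a * Coalgebra.counit (R := Λ) b from by
        rw [TensorProduct.counit_tmul, smul_eq_mul, mul_comm]]
    simp only [LinearMap.comp_apply, TensorProduct.map_tmul]
    show _ = shuffle Λ A B 0
      ((PiTensorProduct.isEmptyEquiv (Fin 0)).symm (Coalgebra.counit a) ⊗ₜ[Λ]
        (PiTensorProduct.isEmptyEquiv (Fin 0)).symm (Coalgebra.counit b))
    simp only [shuffle, LinearMap.comp_apply, LinearEquiv.coe_toLinearMap,
      TensorProduct.map_tmul, LinearEquiv.apply_symm_apply, TensorProduct.lid_tmul,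
      smul_eq_mul]
  | succ k ih =>
    refine TensorProduct.ext' fun a b => ?_
    rw [comulIter_succ, comulIter_succ Λ A, comulIter_succ Λ B]
    simp only [LinearMap.comp_apply, TensorProduct.map_tmul]
    rw [show (Coalgebra.comul (a ⊗ₜ[Λ] b) : (A ⊗[Λ] B) ⊗[Λ] (A ⊗[Λ] B)) =
      (TensorProduct.tensorTensorTensorComm Λ A A B B)
        (Coalgebra.comul a ⊗ₜ[Λ] Coalgebra.comul b) from rfl]
    generalize (Coalgebra.comul a : A ⊗[Λ] A) = u
    generalize (Coalgebra.comul b : B ⊗[Λ] B) = v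
    induction u using TensorProduct.induction_on with
    | zero => simp
    | add u₁ u₂ h1 h2 =>
      simp only [TensorProduct.add_tmul, map_add, TensorProduct.add_tmul] at h1 h2 ⊢
      rw [h1, h2]
    | tmul x₁ x₂ =>
      induction v using TensorProduct.induction_on with
      | zero => simp
      | add v₁ v₂ h1 h2 =>
        simp only [TensorProduct.tmul_add, map_add] at h1 h2 ⊢
        rw [h1, h2]
      | tmul y₁ y₂ =>
        rw [TensorProduct.tensorTensorTensorComm_tmul]
        simp only [TensorProduct.map_tmul, ih]
        simp only [LinearMap.comp_apply, TensorProduct.map_tmul]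
        show Phi Λ (A ⊗[Λ] B) k
            (sing Λ (A ⊗[Λ] B) (x₁ ⊗ₜ[Λ] y₁) ⊗ₜ[Λ]
              shuffle Λ A B k (comulIter Λ A k x₂ ⊗ₜ[Λ] comulIter Λ B k y₂)) =
          Phi Λ (A ⊗[Λ] B) k
            ((TensorProduct.map (pair1 Λ A B) (shuffle Λ A B k))
              ((TensorProduct.tensorTensorTensorComm Λ _ _ _ _)
                ((PhiInv Λ A k) ((Phi Λ A k) (sing Λ A x₁ ⊗ₜ[Λ] comulIter Λ A k x₂)) ⊗ₜ[Λ]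
                 (PhiInv Λ B k) ((Phi Λ B k) (sing Λ B y₁ ⊗ₜ[Λ] comulIter Λ B k y₂)))))
        rw [← LinearMap.comp_apply (PhiInv Λ A k), PhiInv_Phi,
          ← LinearMap.comp_apply (PhiInv Λ B k), PhiInv_Phi]
        simp only [LinearMap.id_apply]
        rw [TensorProduct.tensorTensorTensorComm_tmul]
        simp only [TensorProduct.map_tmul]
        congr 1
        have := LinearMap.congr_fun (pair1_sing Λ A B) (x₁ ⊗ₜ[Λ] y₁)
        simp only [LinearMap.comp_apply, TensorProduct.map_tmul] at this
        rw [this]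


variable (ηA : Λ →ₗ[Λ] A) (ηB : Λ →ₗ[Λ] B)

lemma counitC_tmul (x : A) (y : B) :
    (Coalgebra.counit (x ⊗ₜ[Λ] y) : Λ) =
      Coalgebra.counit (R := Λ) x * Coalgebra.counit (R := Λ) y := by
  rw [TensorProduct.counit_tmul, smul_eq_mul, mul_comm]

lemma piC_apply (x : A) (y : B) :
    ((LinearMap.id : (A ⊗[Λ] B) →ₗ[Λ] (A ⊗[Λ] B)) -
      (TensorProduct.map ηA ηB ∘ₗ (TensorProduct.lid Λ Λ).symm.toLinearMap) ∘ₗ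
        (Coalgebra.counit (R := Λ) (A := A ⊗[Λ] B))) (x ⊗ₜ[Λ] y) =
    ∑ t : Fin 3, TensorProduct.map (cnd Λ A ηA (decide (t ≠ 2)))
      (cnd Λ B ηB (decide (t ≠ 1))) (x ⊗ₜ[Λ] y) := by
  rw [Fin.sum_univ_three]
  have hc0 : (decide ((0 : Fin 3) ≠ 2)) = true := by decide
  have hc1 : (decide ((1 : Fin 3) ≠ 2)) = true := by decide
  have hc2 : (decide ((2 : Fin 3) ≠ 2)) = false := by decide
  have hd0 : (decide ((0 : Fin 3) ≠ 1)) = true := by decide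
  have hd1 : (decide ((1 : Fin 3) ≠ 1)) = false := by decide
  have hd2 : (decide ((2 : Fin 3) ≠ 1)) = true := by decide
  rw [hc0, hc1, hc2, hd0, hd1, hd2]
  simp only [cnd, Bool.false_eq_true, if_true, if_false]
  simp only [LinearMap.sub_apply, LinearMap.id_apply, LinearMap.comp_apply,
    TensorProduct.map_tmul, counitC_tmul Λ A B, LinearEquiv.coe_toLinearMap,
    TensorProduct.lid_symm_apply]
  have key : ηA 1 ⊗ₜ[Λ] ηB (Coalgebra.counit (R := Λ) x * Coalgebra.counit (R := Λ) y) =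
      ηA (Coalgebra.counit (R := Λ) x) ⊗ₜ[Λ] ηB (Coalgebra.counit (R := Λ) y) := by
    rw [eta_r Λ B ηB (Coalgebra.counit (R := Λ) x * Coalgebra.counit (R := Λ) y),
      eta_r Λ A ηA (Coalgebra.counit (R := Λ) x),
      eta_r Λ B ηB (Coalgebra.counit (R := Λ) y)]
    rw [TensorProduct.tmul_smul, TensorProduct.tmul_smul, ← TensorProduct.smul_tmul',
      smul_smul, mul_comm (Coalgebra.counit (R := Λ) y)]
  rw [key]
  simp only [TensorProduct.sub_tmul, TensorProduct.tmul_sub]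
  abel

lemma redPowC_shuffle (k : ℕ) :
    redPow Λ (A ⊗[Λ] B) (TensorProduct.map ηA ηB ∘ₗ (TensorProduct.lid Λ Λ).symm.toLinearMap)
        k ∘ₗ shuffle Λ A B k =
      ∑ f : Fin k → Fin 3, shuffle Λ A B k ∘ₗ
        TensorProduct.map (PiTensorProduct.map (fun i => cnd Λ A ηA (decide (f i ≠ 2))))
          (PiTensorProduct.map (fun i => cnd Λ B ηB (decide (f i ≠ 1)))) := by
  apply extTT
  intro a b
  simp only [LinearMap.comp_apply, shuffle_tprod, redPow, PiTensorProduct.map_tprod]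
  simp only [piC_apply Λ A B ηA ηB]
  rw [MultilinearMap.map_sum]
  simp only [LinearMap.sum_apply, LinearMap.comp_apply, TensorProduct.map_tmul,
    PiTensorProduct.map_tprod, shuffle_tprod]

lemma count_three (k : ℕ) (f : Fin k → Fin 3) :
    k ≤ sCount (fun i => decide (f i ≠ 2)) + sCount (fun i => decide (f i ≠ 1)) := by
  unfold sCount
  rw [← Finset.sum_add_distrib]
  calc k = ∑ _i : Fin k, 1 := by simp
    _ ≤ _ := by
      refine Finset.sum_le_sum fun i _ => ?_
      by_cases h2 : f i = 2
      · have : decide (f i ≠ 1) = true := by rw [h2]; decide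
        simp [this]
      · have : decide (f i ≠ 2) = true := by simpa using h2
        simp [this]

lemma part2 (hηAcomul : Coalgebra.comul (R := Λ) (A := A) (ηA 1) = ηA 1 ⊗ₜ[Λ] ηA 1)
    (hηAcounit : Coalgebra.counit (R := Λ) (A := A) (ηA 1) = (1 : Λ))
    (hηBcomul : Coalgebra.comul (R := Λ) (A := B) (ηB 1) = ηB 1 ⊗ₜ[Λ] ηB 1)
    (hηBcounit : Coalgebra.counit (R := Λ) (A := B) (ηB 1) = (1 : Λ))
    (a : A) (bb : B) (n m : ℕ) (hn : 1 ≤ n) (hm : 1 ≤ m)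
    (ha : redPow Λ A ηA n (comulIter Λ A n a) = 0)
    (hb : redPow Λ B ηB m (comulIter Λ B m bb) = 0)
    (k : ℕ) (hk : k + 1 = n + m) :
    redPow Λ (A ⊗[Λ] B) (TensorProduct.map ηA ηB ∘ₗ (TensorProduct.lid Λ Λ).symm.toLinearMap)
      k (comulIter Λ (A ⊗[Λ] B) k (a ⊗ₜ[Λ] bb)) = 0 := by
  rw [comulIter_tensor]
  simp only [LinearMap.comp_apply, TensorProduct.map_tmul]
  have h := LinearMap.congr_fun (redPowC_shuffle Λ A B ηA ηB k)
    (comulIter Λ A k a ⊗ₜ[Λ] comulIter Λ B k bb)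
  simp only [LinearMap.comp_apply, LinearMap.sum_apply, TensorProduct.map_tmul] at h
  rw [h]
  refine Finset.sum_eq_zero fun f _ => ?_
  by_cases hA : n ≤ sCount (fun i => decide (f i ≠ 2))
  · rw [vanish Λ A ηA hηAcomul hηAcounit k _ n hn hA a ha]
    simp
  · have hB : m ≤ sCount (fun i => decide (f i ≠ 1)) := by
      have := count_three k f
      have hle : sCount (fun i => decide (f i ≠ 2)) ≤ k := by
        unfold sCount
        calc ∑ i, (if decide (f i ≠ 2) = true then 1 else 0) ≤ ∑ _i : Fin k, 1 :=
          Finset.sum_le_sum fun i _ => by split <;> omega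
        _ = k := by simp
      omega
    rw [vanish Λ B ηB hηBcomul hηBcounit k _ m hm hB bb hb]
    simp

lemma part3 (hηAcomul : Coalgebra.comul (R := Λ) (A := A) (ηA 1) = ηA 1 ⊗ₜ[Λ] ηA 1)
    (hηAcounit : Coalgebra.counit (R := Λ) (A := A) (ηA 1) = (1 : Λ))
    (hηBcomul : Coalgebra.comul (R := Λ) (A := B) (ηB 1) = ηB 1 ⊗ₜ[Λ] ηB 1)
    (hηBcounit : Coalgebra.counit (R := Λ) (A := B) (ηB 1) = (1 : Λ))
    (a : A) (n : ℕ) (hn : 1 ≤ n)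
    (ha : redPow Λ A ηA n (comulIter Λ A n a) = 0) :
    redPow Λ (A ⊗[Λ] B) (TensorProduct.map ηA ηB ∘ₗ (TensorProduct.lid Λ Λ).symm.toLinearMap)
      n (comulIter Λ (A ⊗[Λ] B) n (a ⊗ₜ[Λ] ηB 1)) = 0 := by
  rw [comulIter_tensor]
  simp only [LinearMap.comp_apply, TensorProduct.map_tmul]
  have h := LinearMap.congr_fun (redPowC_shuffle Λ A B ηA ηB n)
    (comulIter Λ A n a ⊗ₜ[Λ] comulIter Λ B n (ηB 1))
  simp only [LinearMap.comp_apply, LinearMap.sum_apply, TensorProduct.map_tmul] at h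
  rw [h]
  refine Finset.sum_eq_zero fun f _ => ?_
  by_cases hA : ∀ i, f i ≠ 2
  · have hs : n ≤ sCount (fun i => decide (f i ≠ 2)) := by
      unfold sCount
      have : ∀ i : Fin n, (if decide (f i ≠ 2) = true then 1 else 0) = 1 := fun i => by
        simp [hA i]
      rw [Finset.sum_congr rfl fun i _ => this i]
      simp
    rw [vanish Λ A ηA hηAcomul hηAcounit n _ n hn hs a ha]
    simp
  · push_neg at hA
    obtain ⟨i0, hi0⟩ := hA
    have hBzero : PiTensorProduct.map (fun i => cnd Λ B ηB (decide (f i ≠ 1)))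
        (comulIter Λ B n (ηB 1)) = 0 := by
      rw [comulIter_eta Λ B ηB hηBcomul hηBcounit]
      rw [PiTensorProduct.map_tprod]
      refine MultilinearMap.map_coord_zero _ i0 ?_
      have hd : decide (f i0 ≠ 1) = true := by rw [hi0]; decide
      rw [hd]
      show cnd Λ B ηB true (ηB 1) = 0
      rw [show cnd Λ B ηB true =
        ((LinearMap.id : B →ₗ[Λ] B) - ηB ∘ₗ (Coalgebra.counit (R := Λ) (A := B))) from by
          simp [cnd]]
      exact pi_eta Λ B ηB hηBcounit
    rw [hBzero]
    simp


lemma etaC_one :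
    (TensorProduct.map ηA ηB ∘ₗ (TensorProduct.lid Λ Λ).symm.toLinearMap) (1 : Λ) =
      ηA 1 ⊗ₜ[Λ] ηB 1 := by
  simp [TensorProduct.lid_symm_apply]

lemma etaC_comul (hηAcomul : Coalgebra.comul (R := Λ) (A := A) (ηA 1) = ηA 1 ⊗ₜ[Λ] ηA 1)
    (hηBcomul : Coalgebra.comul (R := Λ) (A := B) (ηB 1) = ηB 1 ⊗ₜ[Λ] ηB 1) :
    Coalgebra.comul (R := Λ) (A := A ⊗[Λ] B)
        ((TensorProduct.map ηA ηB ∘ₗ (TensorProduct.lid Λ Λ).symm.toLinearMap) 1) =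
      ((TensorProduct.map ηA ηB ∘ₗ (TensorProduct.lid Λ Λ).symm.toLinearMap) 1) ⊗ₜ[Λ]
        ((TensorProduct.map ηA ηB ∘ₗ (TensorProduct.lid Λ Λ).symm.toLinearMap) 1) := by
  rw [etaC_one]
  rw [show Coalgebra.comul (R := Λ) (ηA 1 ⊗ₜ[Λ] ηB 1) =
    (TensorProduct.tensorTensorTensorComm Λ A A B B)
      (Coalgebra.comul (ηA 1) ⊗ₜ[Λ] Coalgebra.comul (ηB 1)) from rfl]
  rw [hηAcomul, hηBcomul, TensorProduct.tensorTensorTensorComm_tmul]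

lemma etaC_counit (hηAcounit : Coalgebra.counit (R := Λ) (A := A) (ηA 1) = (1 : Λ))
    (hηBcounit : Coalgebra.counit (R := Λ) (A := B) (ηB 1) = (1 : Λ)) :
    Coalgebra.counit (R := Λ) (A := A ⊗[Λ] B)
        ((TensorProduct.map ηA ηB ∘ₗ (TensorProduct.lid Λ Λ).symm.toLinearMap) 1) = (1 : Λ) := by
  rw [etaC_one, counitC_tmul Λ A B, hηAcounit, hηBcounit, one_mul]

end TensorSide

/-- the tensor product `A ⊗ B` of conilpotent cocategories (with
comultiplication `(Δ ⊗ Δ)` followed by the middle four interchange — the standard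
tensor-product coalgebra structure — and augmentation `η_A ⊗ η_B`) is conilpotent.
Quantitatively, if `Δ̄⁽ⁿ⁾ a = 0` and `Δ̄⁽ᵐ⁾ b = 0` then `Δ̄⁽ⁿ⁺ᵐ⁻¹⁾(a ⊗ b) = 0`,
and `Δ̄⁽ⁿ⁾(a ⊗ η_B 1) = 0`. -/
theorem stmt15 {A B : Type u}
    [AddCommGroup A] [Module Λ A] [Coalgebra Λ A]
    [AddCommGroup B] [Module Λ B] [Coalgebra Λ B]
    (ηA : Λ →ₗ[Λ] A) (ηB : Λ →ₗ[Λ] B)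
    (hηAcomul : Coalgebra.comul (ηA 1) = ηA 1 ⊗ₜ[Λ] ηA 1)
    (hηAcounit : Coalgebra.counit (ηA 1) = (1 : Λ))
    (hηBcomul : Coalgebra.comul (ηB 1) = ηB 1 ⊗ₜ[Λ] ηB 1)
    (hηBcounit : Coalgebra.counit (ηB 1) = (1 : Λ)) :
    let ηC : Λ →ₗ[Λ] A ⊗[Λ] B :=
      TensorProduct.map ηA ηB ∘ₗ (TensorProduct.lid Λ Λ).symm.toLinearMap
    (IsConilpotent Λ A ηA → IsConilpotent Λ B ηB → IsConilpotent Λ (A ⊗[Λ] B) ηC) ∧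
    (∀ (a : A) (bb : B) (n m : ℕ), 1 ≤ n → 1 ≤ m →
      redPow Λ A ηA n (comulIter Λ A n a) = 0 →
      redPow Λ B ηB m (comulIter Λ B m bb) = 0 →
      redPow Λ (A ⊗[Λ] B) ηC (n + m - 1)
        (comulIter Λ (A ⊗[Λ] B) (n + m - 1) (a ⊗ₜ[Λ] bb)) = 0) ∧
    (∀ (a : A) (n : ℕ), 1 ≤ n →
      redPow Λ A ηA n (comulIter Λ A n a) = 0 →
      redPow Λ (A ⊗[Λ] B) ηC n (comulIter Λ (A ⊗[Λ] B) n (a ⊗ₜ[Λ] ηB 1)) = 0) := by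
  intro ηC
  have hCcomul : Coalgebra.comul (R := Λ) (A := A ⊗[Λ] B) (ηC 1) = ηC 1 ⊗ₜ[Λ] ηC 1 :=
    etaC_comul Λ A B ηA ηB hηAcomul hηBcomul
  have hCcounit : Coalgebra.counit (R := Λ) (A := A ⊗[Λ] B) (ηC 1) = (1 : Λ) :=
    etaC_counit Λ A B ηA ηB hηAcounit hηBcounit
  refine ⟨?_, ?_, ?_⟩
  · intro hA hB x
    induction x using TensorProduct.induction_on with
    | zero => exact ⟨2, by omega, by rw [map_zero, map_zero]⟩
    | tmul a b =>
      obtain ⟨n, hn1, hn⟩ := hA a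
      obtain ⟨m, hm1, hm⟩ := hB b
      exact ⟨n + m - 1, by omega,
        part2 Λ A B ηA ηB hηAcomul hηAcounit hηBcomul hηBcounit a b n m (by omega) (by omega)
          hn hm (n + m - 1) (by omega)⟩
    | add x y hx hy =>
      obtain ⟨n, hn1, hn⟩ := hx
      obtain ⟨m, hm1, hm⟩ := hy
      refine ⟨max n m, by omega, ?_⟩
      rw [map_add, map_add,
        mono Λ (A ⊗[Λ] B) ηC hCcomul hCcounit (by omega : 1 ≤ n) (le_max_left n m) x hn,
        mono Λ (A ⊗[Λ] B) ηC hCcomul hCcounit (by omega : 1 ≤ m) (le_max_right n m) y hm,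
        add_zero]
  · intro a bb n m hn hm ha hb
    exact part2 Λ A B ηA ηB hηAcomul hηAcounit hηBcomul hηBcounit a bb n m hn hm ha hb
      (n + m - 1) (by omega)
  · intro a n hn ha
    exact part3 Λ A B ηA ηB hηAcomul hηAcounit hηBcomul hηBcounit a n hn ha
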